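/- arXiv:1507.01534 — 3 statements merged into one kernel-verified Lean document; each statement's English description precedes it below -/
import Mathlib

section
/- Let f ∈ Lie[x,y] be homogeneous of even weight n ≥ 4 with coefficients satisfying the depth-2 stuffle relations (f|x^i y x^{n−2−i} y)+(f|x^{n−2−i} y x^i y)+(f|x^{n−1} y)=0 for all 0 ≤ i ≤ n−2. Then (f|x^{n−1}y) = 0; i.e., there is no element of ds of depth 1 in even weight. -/
noncomputable section

attribute [local instance] LieRing.ofAssociativeRing

/-- `ℚ⟨x,y⟩`, realized as the monoid algebra of the free monoid on `{x, y}`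
(`x` is the letter `true`, `y` is the letter `false`). -/
abbrev QXY := MonoidAlgebra ℚ (FreeMonoid Bool)

/-- The generator `x`. -/
def Xgen : QXY := MonoidAlgebra.of ℚ (FreeMonoid Bool) (FreeMonoid.of true)

/-- The generator `y`. -/
def Ygen : QXY := MonoidAlgebra.of ℚ (FreeMonoid Bool) (FreeMonoid.of false)

/-- `Lie[x,y]`: the Lie subalgebra of `ℚ⟨x,y⟩` (with the commutator bracket)
generated by `x` and `y`. -/
def LieXY : LieSubalgebra ℚ QXY := LieSubalgebra.lieSpan ℚ QXY {Xgen, Ygen}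


open MulOpposite

def Phi : QXY →ₐ[ℚ] QXYᵐᵒᵖ :=
  MonoidAlgebra.lift ℚ QXYᵐᵒᵖ (FreeMonoid Bool)
    (FreeMonoid.lift fun b => op (-(if b then Xgen else Ygen)))

lemma Phi_of (b : Bool) : Phi (MonoidAlgebra.single (FreeMonoid.of b) (1:ℚ))
    = op (-(if b then Xgen else Ygen)) := by
  have : MonoidAlgebra.single (FreeMonoid.of b) (1:ℚ)
      = MonoidAlgebra.of ℚ (FreeMonoid Bool) (FreeMonoid.of b) := rfl
  rw [this, Phi, MonoidAlgebra.lift_of]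
  simp

lemma Phi_single (l : List Bool) :
    Phi (MonoidAlgebra.single (FreeMonoid.ofList l) (1:ℚ))
      = op ((-1:ℚ)^l.length • MonoidAlgebra.single (FreeMonoid.ofList l.reverse) (1:ℚ)) := by
  induction l with
  | nil =>
    have h1 : MonoidAlgebra.single (FreeMonoid.ofList ([] : List Bool)) (1:ℚ) = 1 := rfl
    rw [h1, map_one]
    simp only [List.length_nil, pow_zero, one_smul, List.reverse_nil, h1]
    rfl
  | cons a l ih =>
    have h1 : MonoidAlgebra.single (FreeMonoid.ofList (a :: l)) (1:ℚ)
        = MonoidAlgebra.single (FreeMonoid.of a) (1:ℚ)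
          * MonoidAlgebra.single (FreeMonoid.ofList l) (1:ℚ) := by
      rw [MonoidAlgebra.single_mul_single, one_mul, FreeMonoid.ofList_cons]
    rw [h1, map_mul, Phi_of, ih, ← op_mul]
    congr 1
    have key : ∀ b : Bool, MonoidAlgebra.single (FreeMonoid.ofList l.reverse) (1:ℚ)
        * MonoidAlgebra.single (FreeMonoid.of b) (1:ℚ)
        = MonoidAlgebra.single (FreeMonoid.ofList (l.reverse ++ [b])) (1:ℚ) := by
      intro b
      rw [MonoidAlgebra.single_mul_single, mul_one, ← FreeMonoid.ofList_singleton,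
        ← FreeMonoid.ofList_append]
    cases a with
    | true =>
      have hX : (if true then Xgen else Ygen)
          = MonoidAlgebra.single (FreeMonoid.of true) (1:ℚ) := rfl
      rw [hX, smul_mul_assoc, mul_neg, key, List.reverse_cons, List.length_cons, pow_succ]
      module
    | false =>
      have hY : (if false then Xgen else Ygen)
          = MonoidAlgebra.single (FreeMonoid.of false) (1:ℚ) := rfl
      rw [hY, smul_mul_assoc, mul_neg, key, List.reverse_cons, List.length_cons, pow_succ]
      module

lemma Phi_apply_pal (w0 : List Bool) (hpal : w0.reverse = w0) (hev : Even w0.length)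
    (g : QXY) : (unop (Phi g)).coeff (FreeMonoid.ofList w0) = g.coeff (FreeMonoid.ofList w0) := by
  classical
  induction g using MonoidAlgebra.induction_linear with
  | zero => simp
  | add a b ha hb => rw [map_add, unop_add, MonoidAlgebra.coeff_add, MonoidAlgebra.coeff_add,
      Finsupp.add_apply, Finsupp.add_apply, ha, hb]
  | single a b =>
    show (unop (Phi (MonoidAlgebra.single (FreeMonoid.ofList (FreeMonoid.toList a)) b))).coeff
          (FreeMonoid.ofList w0)
        = (MonoidAlgebra.single (FreeMonoid.ofList (FreeMonoid.toList a)) b).coeff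
          (FreeMonoid.ofList w0)
    generalize FreeMonoid.toList a = l
    show (unop (Phi (MonoidAlgebra.single (FreeMonoid.ofList l) b))).coeff (FreeMonoid.ofList w0)
        = (MonoidAlgebra.single (FreeMonoid.ofList l) b).coeff (FreeMonoid.ofList w0)
    have hb : MonoidAlgebra.single (FreeMonoid.ofList l) b
        = b • MonoidAlgebra.single (FreeMonoid.ofList l) (1:ℚ) := by
      rw [MonoidAlgebra.smul_single', mul_one]
    rw [MonoidAlgebra.coeff_single_apply]
    conv_lhs => rw [hb, map_smul, Phi_single, unop_smul, unop_op, MonoidAlgebra.coeff_smul_apply,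
      MonoidAlgebra.coeff_smul_apply, smul_eq_mul, smul_eq_mul, MonoidAlgebra.coeff_single_apply]
    by_cases h : l = w0
    · have h1 : FreeMonoid.ofList l.reverse = FreeMonoid.ofList w0 := by rw [h, hpal]
      have h2 : FreeMonoid.ofList l = FreeMonoid.ofList w0 := by rw [h]
      rw [if_pos h1, if_pos h2, h, hev.neg_one_pow]
      ring
    · have h1 : ¬ (FreeMonoid.ofList l.reverse = FreeMonoid.ofList w0) := by
        intro hc
        apply h
        have h3 : l.reverse = w0 := FreeMonoid.ofList.injective hc
        rw [← List.reverse_reverse l, h3, hpal]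
      have h2 : ¬ (FreeMonoid.ofList l = FreeMonoid.ofList w0) := by
        intro hc
        exact h (FreeMonoid.ofList.injective hc)
      rw [if_neg h1, if_neg h2]
      ring


def Tpal : LieSubalgebra ℚ QXY where
  carrier := {g | Phi g = op (-g)}
  add_mem' := by
    intro a b ha hb
    simp only [Set.mem_setOf_eq] at *
    rw [map_add, ha, hb, ← op_add, neg_add]
  zero_mem' := by simp
  smul_mem' := by
    intro c a ha
    simp only [Set.mem_setOf_eq] at *
    rw [map_smul, ha, ← op_smul, smul_neg]
  lie_mem' := by
    intro a b ha hb
    simp only [Set.mem_setOf_eq] at *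
    rw [Ring.lie_def, map_sub, map_mul, map_mul, ha, hb, ← op_mul, ← op_mul, ← op_sub]
    congr 1
    noncomm_ring

lemma pal_zero (g : QXY) (hg : g ∈ LieXY) (w0 : List Bool) (hpal : w0.reverse = w0)
    (hev : Even w0.length) : g.coeff (FreeMonoid.ofList w0) = 0 := by
  have hle : LieXY ≤ Tpal := by
    rw [LieXY, LieSubalgebra.lieSpan_le]
    rintro z (rfl | rfl)
    · show Phi Xgen = op (-Xgen)
      rw [Phi, Xgen, MonoidAlgebra.lift_of]
      simp
    · show Phi Ygen = op (-Ygen)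
      rw [Phi, Ygen, MonoidAlgebra.lift_of]
      simp
  have hT : Phi g = op (-g) := hle hg
  have := Phi_apply_pal w0 hpal hev g
  rw [hT, unop_op] at this
  have h2 : (-g).coeff (FreeMonoid.ofList w0) = -(g.coeff (FreeMonoid.ofList w0)) := rfl
  rw [h2] at this
  linarith

open TrivSqZeroExt

def Psi : QXY →ₐ[ℚ] TrivSqZeroExt QXY QXY :=
  MonoidAlgebra.lift ℚ (TrivSqZeroExt QXY QXY) (FreeMonoid Bool)
    (FreeMonoid.lift fun b => if b then .inl Xgen else (.inl Ygen + .inr 1))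

lemma fst_Psi (g : QXY) : (Psi g).fst = g := by
  have h : (TrivSqZeroExt.fstHom ℚ QXY QXY).comp Psi = AlgHom.id ℚ QXY := by
    apply MonoidAlgebra.algHom_ext'
    apply FreeMonoid.hom_eq
    intro b
    cases b <;> simp [Psi, Xgen, Ygen, MonoidAlgebra.lift_of]
    exact Subsingleton.elim _ _
  calc (Psi g).fst = ((TrivSqZeroExt.fstHom ℚ QXY QXY).comp Psi) g := rfl
  _ = g := by rw [h]; rfl

lemma Psi_of (b : Bool) : Psi (MonoidAlgebra.single (FreeMonoid.of b) (1:ℚ))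
    = if b then .inl Xgen else (.inl Ygen + .inr 1) := by
  have : MonoidAlgebra.single (FreeMonoid.of b) (1:ℚ)
      = MonoidAlgebra.of ℚ (FreeMonoid Bool) (FreeMonoid.of b) := rfl
  rw [this, Psi, MonoidAlgebra.lift_of]
  rfl

lemma letter_mul_apply_cons (b : Bool) (m : QXY) (u : List Bool) :
    (MonoidAlgebra.single (FreeMonoid.of b) (1:ℚ) * m).coeff (FreeMonoid.ofList (b :: u))
      = m.coeff (FreeMonoid.ofList u) := by
  rw [MonoidAlgebra.coeff_single_mul_eq_mul_coeff (x := m)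
    (m := FreeMonoid.of b) (m₁ := FreeMonoid.ofList (b :: u)) (FreeMonoid.ofList u),
    one_mul]
  intro d _
  constructor
  · intro hd
    have h2 : b :: FreeMonoid.toList d = b :: u := congrArg FreeMonoid.toList hd
    have h3 : FreeMonoid.toList d = u := by injection h2
    exact congrArg FreeMonoid.ofList h3
  · intro hd
    rw [hd]
    exact (FreeMonoid.ofList_cons b u).symm

lemma letter_mul_apply_zero (b : Bool) (m : QXY) (u : List Bool)
    (h : u.head? ≠ some b) :
    (MonoidAlgebra.single (FreeMonoid.of b) (1:ℚ) * m).coeff (FreeMonoid.ofList u) = 0 := by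
  apply MonoidAlgebra.single_mul_apply_of_not_exists_mul
  rintro ⟨d, hd⟩
  apply h
  have h2 : u = b :: FreeMonoid.toList d := congrArg FreeMonoid.toList hd
  rw [h2]
  rfl

lemma hofiff (p q : List Bool) : (FreeMonoid.ofList p = FreeMonoid.ofList q) ↔ p = q :=
  ⟨fun h => FreeMonoid.ofList.injective h, fun h => congrArg _ h⟩

lemma ifq (P Q : Prop) [Decidable P] [Decidable Q] (h : P ↔ Q) :
    (if P then (1:ℚ) else 0) = (if Q then 1 else 0) := if_congr h rfl rfl

lemma snd_Psi_word (w : List Bool) : ∀ (u : List Bool),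
    (Psi (MonoidAlgebra.single (FreeMonoid.ofList w) (1:ℚ))).snd.coeff (FreeMonoid.ofList u)
      = ∑ j ∈ Finset.range (u.length + 1),
          (if u.insertIdx j false = w then (1:ℚ) else 0) := by
  classical
  induction w with
  | nil =>
    intro u
    have h1 : MonoidAlgebra.single (FreeMonoid.ofList ([] : List Bool)) (1:ℚ) = 1 := rfl
    rw [h1, map_one, snd_one, MonoidAlgebra.coeff_zero, Finsupp.zero_apply]
    symm
    apply Finset.sum_eq_zero
    intro j hj
    rw [if_neg]
    intro hc
    have hl := congrArg List.length hc
    rw [List.length_insertIdx, if_pos (Nat.lt_succ_iff.mp (Finset.mem_range.mp hj))] at hl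
    simp at hl
  | cons a w' ih =>
    intro u
    have h1 : MonoidAlgebra.single (FreeMonoid.ofList (a :: w')) (1:ℚ)
        = MonoidAlgebra.single (FreeMonoid.of a) (1:ℚ)
          * MonoidAlgebra.single (FreeMonoid.ofList w') (1:ℚ) := by
      rw [MonoidAlgebra.single_mul_single, one_mul, FreeMonoid.ofList_cons]
    rw [h1, map_mul, Psi_of, snd_mul, Finset.sum_range_succ', fst_Psi]
    cases a with
    | true =>
      rw [if_pos rfl, snd_inl, fst_inl]
      have hz : (MulOpposite.op (MonoidAlgebra.single (FreeMonoid.ofList w') (1:ℚ))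
          • (0 : QXY)) = 0 := smul_zero _
      rw [hz, add_zero]
      have hsm : (Xgen • (Psi (MonoidAlgebra.single (FreeMonoid.ofList w') (1:ℚ))).snd)
          = MonoidAlgebra.single (FreeMonoid.of true) (1:ℚ)
            * (Psi (MonoidAlgebra.single (FreeMonoid.ofList w') (1:ℚ))).snd := rfl
      rw [hsm]
      have h2 : (if u.insertIdx 0 false = true :: w' then (1:ℚ) else 0) = 0 := by
        rw [List.insertIdx_zero, if_neg]
        intro hc
        injection hc with hc1 _
        exact Bool.false_ne_true hc1
      rw [h2, add_zero]
      cases u with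
      | nil =>
        rw [letter_mul_apply_zero true _ [] (by simp)]
        simp
      | cons c u' =>
        have hins : ∀ j : ℕ, (c :: u').insertIdx (j+1) false = c :: u'.insertIdx j false :=
          fun j => List.insertIdx_succ_cons (xs := u') (hd := c) (x := false) (i := j)
        cases c with
        | true =>
          rw [letter_mul_apply_cons true _ u', ih u', List.length_cons]
          apply Finset.sum_congr rfl
          intro j hj
          rw [hins j]
          apply ifq
          constructor
          · intro h3; rw [h3]
          · intro h3; injection h3
        | false =>
          rw [letter_mul_apply_zero true _ (false :: u') (by simp)]
          symm
          apply Finset.sum_eq_zero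
          intro j hj
          rw [hins j, if_neg]
          intro h3
          injection h3 with h4 _
          exact Bool.false_ne_true h4
    | false =>
      rw [if_neg Bool.false_ne_true, snd_add, snd_inl, snd_inr, fst_add, fst_inl, fst_inr,
        add_zero, zero_add]
      have hop : (MulOpposite.op (MonoidAlgebra.single (FreeMonoid.ofList w') (1:ℚ))
          • (1 : QXY)) = MonoidAlgebra.single (FreeMonoid.ofList w') (1:ℚ) := by
        rw [op_smul_eq_mul, one_mul]
      rw [hop]
      have hsm : (Ygen • (Psi (MonoidAlgebra.single (FreeMonoid.ofList w') (1:ℚ))).snd)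
          = MonoidAlgebra.single (FreeMonoid.of false) (1:ℚ)
            * (Psi (MonoidAlgebra.single (FreeMonoid.ofList w') (1:ℚ))).snd := rfl
      rw [hsm, MonoidAlgebra.coeff_add, Finsupp.add_apply]
      have h2 : (if u.insertIdx 0 false = false :: w' then (1:ℚ) else 0)
          = (MonoidAlgebra.single (FreeMonoid.ofList w') (1:ℚ)).coeff (FreeMonoid.ofList u) := by
        rw [List.insertIdx_zero, MonoidAlgebra.coeff_single_apply]
        apply ifq
        rw [hofiff]
        constructor
        · intro h3; injection h3 with _ h4; rw [h4]
        · intro h3; rw [h3]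
      rw [← h2]
      congr 1
      cases u with
      | nil =>
        rw [letter_mul_apply_zero false _ [] (by simp)]
        simp
      | cons c u' =>
        have hins : ∀ j : ℕ, (c :: u').insertIdx (j+1) false = c :: u'.insertIdx j false :=
          fun j => List.insertIdx_succ_cons (xs := u') (hd := c) (x := false) (i := j)
        cases c with
        | false =>
          rw [letter_mul_apply_cons false _ u', ih u', List.length_cons]
          apply Finset.sum_congr rfl
          intro j hj
          rw [hins j]
          apply ifq
          constructor
          · intro h3; rw [h3]
          · intro h3; injection h3
        | true =>
          rw [letter_mul_apply_zero false _ (true :: u') (by simp)]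
          symm
          apply Finset.sum_eq_zero
          intro j hj
          rw [hins j, if_neg]
          intro h3
          injection h3 with h4 _
          exact Bool.false_ne_true h4.symm

lemma snd_Psi_eval (u : List Bool) (g : QXY) :
    (Psi g).snd.coeff (FreeMonoid.ofList u)
      = ∑ j ∈ Finset.range (u.length + 1), g.coeff (FreeMonoid.ofList (u.insertIdx j false)) := by
  classical
  induction g using MonoidAlgebra.induction_linear with
  | zero => simp
  | add a b ha hb =>
    rw [map_add, snd_add, MonoidAlgebra.coeff_add, Finsupp.add_apply, ha, hb,
      ← Finset.sum_add_distrib]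
    apply Finset.sum_congr rfl
    intro j hj
    rw [MonoidAlgebra.coeff_add, Finsupp.add_apply]
  | single a b =>
    show (Psi (MonoidAlgebra.single (FreeMonoid.ofList (FreeMonoid.toList a)) b)).snd.coeff
          (FreeMonoid.ofList u)
        = ∑ j ∈ Finset.range (u.length + 1),
            (MonoidAlgebra.single (FreeMonoid.ofList (FreeMonoid.toList a)) b).coeff
              (FreeMonoid.ofList (u.insertIdx j false))
    generalize FreeMonoid.toList a = l
    have hb : MonoidAlgebra.single (FreeMonoid.ofList l) b
        = b • MonoidAlgebra.single (FreeMonoid.ofList l) (1:ℚ) := by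
      rw [MonoidAlgebra.smul_single', mul_one]
    rw [hb, map_smul, snd_smul, MonoidAlgebra.coeff_smul_apply, snd_Psi_word l u, smul_eq_mul,
      Finset.mul_sum]
    apply Finset.sum_congr rfl
    intro j hj
    rw [MonoidAlgebra.coeff_smul_apply, smul_eq_mul, MonoidAlgebra.coeff_single_apply]
    by_cases h : u.insertIdx j false = l
    · rw [if_pos h, if_pos (congrArg FreeMonoid.ofList h.symm), mul_one]
    · rw [if_neg h, if_neg, mul_zero]
      intro hc
      exact h ((hofiff _ _).mp hc).symm

def SLie : LieSubalgebra ℚ QXY where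
  carrier := {g | ∃ c : ℚ, (Psi g).snd = algebraMap ℚ QXY c}
  add_mem' := by
    rintro a b ⟨c1, h1⟩ ⟨c2, h2⟩
    exact ⟨c1 + c2, by rw [map_add, snd_add, h1, h2, map_add]⟩
  zero_mem' := ⟨0, by rw [map_zero, snd_zero, map_zero]⟩
  smul_mem' := by
    rintro r a ⟨c, h⟩
    refine ⟨r * c, ?_⟩
    rw [map_smul, snd_smul, h, map_mul, ← Algebra.smul_def]
  lie_mem' := by
    rintro a b ⟨c1, h1⟩ ⟨c2, h2⟩
    refine ⟨0, ?_⟩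
    rw [Ring.lie_def, map_sub, map_mul, map_mul, snd_sub, snd_mul, snd_mul, h1, h2,
      fst_Psi, fst_Psi, map_zero]
    have e1 : ∀ (z : QXY) (c : ℚ), z • algebraMap ℚ QXY c = z * algebraMap ℚ QXY c :=
      fun z c => rfl
    have e2 : ∀ (z : QXY) (c : ℚ), MulOpposite.op z • algebraMap ℚ QXY c
        = algebraMap ℚ QXY c * z := fun z c => op_smul_eq_mul _ _
    rw [e1, e2, e1, e2]
    rw [← Algebra.commutes c2 a, ← Algebra.commutes c1 b]
    abel

lemma insert_sum_zero (g : QXY) (hg : g ∈ LieXY) (u : List Bool) (hu : u ≠ []) :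
    ∑ j ∈ Finset.range (u.length + 1), g.coeff (FreeMonoid.ofList (u.insertIdx j false)) = 0 := by
  have hle : LieXY ≤ SLie := by
    rw [LieXY, LieSubalgebra.lieSpan_le]
    rintro z (rfl | rfl)
    · refine ⟨0, ?_⟩
      have : Psi Xgen = TrivSqZeroExt.inl Xgen := by
        rw [Xgen, Psi, MonoidAlgebra.lift_of]
        rfl
      rw [this, snd_inl, map_zero]
    · refine ⟨1, ?_⟩
      have : Psi Ygen = TrivSqZeroExt.inl Ygen + TrivSqZeroExt.inr 1 := by
        rw [Ygen, Psi, MonoidAlgebra.lift_of]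
        rfl
      rw [this, snd_add, snd_inl, snd_inr, zero_add, map_one]
  classical
  obtain ⟨c, hc⟩ := hle hg
  rw [← snd_Psi_eval u g, hc]
  rw [Algebra.algebraMap_eq_smul_one, MonoidAlgebra.coeff_smul_apply]
  have h1 : (1 : QXY).coeff (FreeMonoid.ofList u) = 0 := by
    rw [show (1:QXY) = MonoidAlgebra.single 1 1 from rfl, MonoidAlgebra.coeff_single_apply, if_neg]
    · intro hcon
      apply hu
      have := congrArg FreeMonoid.toList hcon
      exact this.symm
  rw [h1, smul_zero]

lemma ins_list (j : ℕ) : ∀ m : ℕ, j ≤ m →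
    (List.replicate m true ++ [false]).insertIdx j false
      = List.replicate j true ++ [false] ++ List.replicate (m - j) true ++ [false] := by
  induction j with
  | zero =>
    intro m _
    rw [List.insertIdx_zero]
    simp
  | succ j ihj =>
    intro m hm
    obtain ⟨m', rfl⟩ : ∃ m', m = m' + 1 := ⟨m - 1, by omega⟩
    have h1 : List.replicate (m' + 1) true = true :: List.replicate m' true :=
      List.replicate_succ
    rw [h1]
    rw [show (true :: List.replicate m' true) ++ [false]
        = true :: (List.replicate m' true ++ [false]) from rfl]
    rw [List.insertIdx_succ_cons, ihj m' (by omega)]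
    have h2 : m' + 1 - (j + 1) = m' - j := by omega
    rw [h2]
    simp [List.replicate_succ]

lemma ins_last (m : ℕ) :
    (List.replicate m true ++ [false]).insertIdx (m+1) false
      = List.replicate m true ++ [false] ++ List.replicate 0 true ++ [false] := by
  have hl : (List.replicate m true ++ [false]).length = m + 1 := by simp
  rw [← hl, List.insertIdx_length_self]
  simp

/-- The word `x^i y x^j y`. -/
def wxyxy (i j : ℕ) : FreeMonoid Bool :=
  FreeMonoid.ofList (List.replicate i true ++ [false] ++ List.replicate j true ++ [false])

/-- The word `x^{n−1} y`. -/
def wxy (n : ℕ) : FreeMonoid Bool :=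
  FreeMonoid.ofList (List.replicate (n - 1) true ++ [false])

/-- a homogeneous Lie element of even weight `n ≥ 4` whose coefficients
satisfy the depth-2 stuffle relations has vanishing depth-1 coefficient `(f | x^{n−1}y)`;
i.e. there is no depth-1 element of `ds` in even weight. -/
theorem no_depth_one_in_even_weight (f : QXY) (n : ℕ) (hn : 4 ≤ n) (hne : Even n)
    (hf : f ∈ LieXY)
    (hhom : ∀ w ∈ f.coeff.support, (FreeMonoid.toList w).length = n)
    (hstuffle : ∀ i : ℕ, i ≤ n - 2 →
        f.coeff (wxyxy i (n - 2 - i)) + f.coeff (wxyxy (n - 2 - i) i) + f.coeff (wxy n) = 0) :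
    f.coeff (wxy n) = 0 := by
  obtain ⟨m, rfl⟩ : ∃ m, n = m + 2 := ⟨n - 2, by omega⟩
  have hsub : m + 2 - 2 = m := by omega
  rw [hsub] at hstuffle
  set c := f.coeff (wxy (m + 2)) with hc
  set A : ℕ → ℚ := fun i => f.coeff (wxyxy i (m - i)) with hA
  have h1 : ∀ i, i ≤ m → A i + A (m - i) + c = 0 := by
    intro i hi
    have h2 : A (m - i) = f.coeff (wxyxy (m - i) i) := by
      show f.coeff (wxyxy (m - i) (m - (m - i))) = f.coeff (wxyxy (m - i) i)
      rw [Nat.sub_sub_self hi]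
    have h3 : A i = f.coeff (wxyxy i (m - i)) := rfl
    rw [h3, h2]
    exact hstuffle i hi
  have h0 : A 0 = 0 := by
    have hw : wxyxy 0 (m - 0)
        = FreeMonoid.ofList (false :: (List.replicate m true ++ [false])) := by
      rw [Nat.sub_zero, wxyxy]
      congr 1
    have hA0 : A 0 = f.coeff (wxyxy 0 (m - 0)) := rfl
    rw [hA0, hw]
    apply pal_zero f hf
    · simp [List.reverse_replicate]
    · have hl2 : (false :: (List.replicate m true ++ [false])).length = m + 2 := by simp
      rw [hl2]
      exact hne
  have key := insert_sum_zero f hf (List.replicate m true ++ [false]) (by simp)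
  have hlen : (List.replicate m true ++ [false]).length = m + 1 := by simp
  rw [hlen, Finset.sum_range_succ, ins_last m] at key
  have hwm : FreeMonoid.ofList
      (List.replicate m true ++ [false] ++ List.replicate 0 true ++ [false]) = wxyxy m 0 :=
    rfl
  rw [hwm] at key
  have hAm : A m = f.coeff (wxyxy m 0) := by
    show f.coeff (wxyxy m (m - m)) = f.coeff (wxyxy m 0)
    rw [Nat.sub_self]
  have hsum : ∑ j ∈ Finset.range (m + 1),
      f.coeff (FreeMonoid.ofList ((List.replicate m true ++ [false]).insertIdx j false))
      = ∑ j ∈ Finset.range (m + 1), A j := by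
    apply Finset.sum_congr rfl
    intro j hj
    have hjm : j ≤ m := by
      have := Finset.mem_range.mp hj
      omega
    rw [ins_list j m hjm]
    rfl
  rw [hsum, ← hAm] at key
  have h4 : A m = -c := by
    have h5 := h1 m le_rfl
    rw [Nat.sub_self, h0] at h5
    linarith
  have h6 : ∑ i ∈ Finset.range (m + 1), (A i + A (m - i) + c) = 0 :=
    Finset.sum_eq_zero fun i hi => h1 i (by
      have := Finset.mem_range.mp hi
      omega)
  rw [Finset.sum_add_distrib, Finset.sum_add_distrib, Finset.sum_const,
    Finset.card_range] at h6
  have h7 : ∑ i ∈ Finset.range (m + 1), A (m - i) = ∑ i ∈ Finset.range (m + 1), A i := by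
    rw [← Finset.sum_range_reflect]
    apply Finset.sum_congr rfl
    intro i hi
    have := Finset.mem_range.mp hi
    congr 1
    omega
  have h5 : ∑ i ∈ Finset.range (m + 1), A i = c := by
    rw [h4] at key
    linarith
  rw [h7, h5, nsmul_eq_mul] at h6
  have h8 : ((m : ℚ) + 3) * c = 0 := by
    push_cast at h6
    linear_combination h6
  rcases mul_eq_zero.mp h8 with h9 | h9
  · exfalso
    have : (0:ℚ) < (m:ℚ) + 3 := by positivity
    linarith
  · exact h9

end
end

section
/- If a bimould A is alternal and mantar-invariant (which holds for all alternal bimoulds) and its swap is also alternal, then A is invariant under neg ∘ push: (neg ∘ push)(A) = A. -/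
/-- A bimould: a function of words whose letters are pairs `wᵢ = (uᵢ, vᵢ)` of complex numbers. -/
abbrev Bimould := List (ℂ × ℂ) → ℂ

namespace Bimould

/-- Variable change for `neg`: negate all `u` and `v` variables. -/
def negWord (w : List (ℂ × ℂ)) : List (ℂ × ℂ) := w.map (fun p => (-p.1, -p.2))

/-- `neg` operator on bimoulds. -/
def neg (M : Bimould) : Bimould := fun w => M (negWord w)

/-- `anti` operator on bimoulds: reversal of the word. -/
def anti (M : Bimould) : Bimould := fun w => M w.reverse

/-- Variable change for `push`:
`push(M)(u₁,…,u_r; v₁,…,v_r) = M(−u₁−⋯−u_r, u₁,…,u_{r−1}; −v_r, v₁−v_r,…,v_{r−1}−v_r)`. -/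
def pushWord (w : List (ℂ × ℂ)) : List (ℂ × ℂ) :=
  match w with
  | [] => []
  | _ =>
    let r := w.length
    let u : ℕ → ℂ := fun i => (w.getD i (0, 0)).1
    let v : ℕ → ℂ := fun i => (w.getD i (0, 0)).2
    (-(w.map Prod.fst).sum, -(v (r - 1))) ::
      (List.range (r - 1)).map (fun i => (u i, v i - v (r - 1)))

/-- `push` operator on bimoulds. -/
def push (M : Bimould) : Bimould := fun w => M (pushWord w)

/-- Variable change for `swap`:
`swap(M)(u₁,…,u_r; v₁,…,v_r) = M(v_r, v_{r−1}−v_r,…,v₁−v₂; u₁+⋯+u_r, u₁+⋯+u_{r−1},…,u₁)`. -/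
def swapWord (w : List (ℂ × ℂ)) : List (ℂ × ℂ) :=
  let r := w.length
  let v : ℕ → ℂ := fun i => (w.getD i (0, 0)).2
  (List.range r).map (fun j =>
    (v (r - 1 - j) - (if j = 0 then 0 else v (r - j)),
     ((w.take (r - j)).map Prod.fst).sum))

/-- `swap` operator on bimoulds. -/
def swap (M : Bimould) : Bimould := fun w => M (swapWord w)

end Bimould

open Bimould in

/-- The list of all shuffles (with multiplicity) of two words. -/
def shuffles {α : Type*} : List α → List α → List (List α)
  | [], ys => [ys]
  | x :: xs, [] => [x :: xs]
  | x :: xs, y :: ys =>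
      ((shuffles xs (y :: ys)).map (x :: ·)) ++ ((shuffles (x :: xs) ys).map (y :: ·))
termination_by u v => u.length + v.length

/-- A bimould is alternal if all its shuffle sums vanish. -/
def Bimould.IsAlternal (M : Bimould) : Prop :=
  ∀ u v : List (ℂ × ℂ), u ≠ [] → v ≠ [] → ((shuffles u v).map M).sum = 0

namespace BimouldAux
open Bimould

noncomputable def us (w : List (ℂ × ℂ)) (i : ℕ) : ℂ := (w.getD i (0,0)).1
noncomputable def vs (w : List (ℂ × ℂ)) (i : ℕ) : ℂ := (w.getD i (0,0)).2
noncomputable def Us (w : List (ℂ × ℂ)) (m : ℕ) : ℂ := ((w.take m).map Prod.fst).sum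

lemma Us_zero (w : List (ℂ × ℂ)) : Us w 0 = 0 := rfl

lemma Us_succ (w : List (ℂ × ℂ)) {m : ℕ} (h : m < w.length) :
    Us w (m+1) = Us w m + us w m := by
  rw [Us, Us, List.take_succ, List.map_append, List.sum_append, us,
    List.getD_eq_getElem w _ h, List.getElem?_eq_getElem h]
  simp

lemma getElem_eq (w : List (ℂ × ℂ)) {i : ℕ} (h : i < w.length) :
    w[i] = (us w i, vs w i) := by
  rw [us, vs, List.getD_eq_getElem w _ h]

lemma swapWord_length (w : List (ℂ × ℂ)) : (swapWord w).length = w.length := by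
  simp [swapWord]

lemma swapWord_getElem (w : List (ℂ × ℂ)) {j : ℕ} (h : j < (swapWord w).length) :
    (swapWord w)[j] =
      (vs w (w.length - 1 - j) - (if j = 0 then 0 else vs w (w.length - j)),
        Us w (w.length - j)) := by
  simp only [swapWord, List.getElem_map, List.getElem_range, vs, Us]

lemma us_swapWord (w : List (ℂ × ℂ)) {j : ℕ} (h : j < w.length) :
    us (swapWord w) j = vs w (w.length - 1 - j) - (if j = 0 then 0 else vs w (w.length - j)) := by
  rw [us, List.getD_eq_getElem _ _ (by simpa [swapWord_length] using h),
    swapWord_getElem w (by simpa [swapWord_length] using h)]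

lemma vs_swapWord (w : List (ℂ × ℂ)) {j : ℕ} (h : j < w.length) :
    vs (swapWord w) j = Us w (w.length - j) := by
  rw [vs, List.getD_eq_getElem _ _ (by simpa [swapWord_length] using h),
    swapWord_getElem w (by simpa [swapWord_length] using h)]

lemma us_reverse (w : List (ℂ × ℂ)) {i : ℕ} (h : i < w.length) :
    us w.reverse i = us w (w.length - 1 - i) := by
  rw [us, us, List.getD_eq_getElem _ _ (by simpa using h),
    List.getD_eq_getElem _ _ (by omega), List.getElem_reverse]

lemma vs_reverse (w : List (ℂ × ℂ)) {i : ℕ} (h : i < w.length) :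
    vs w.reverse i = vs w (w.length - 1 - i) := by
  rw [vs, vs, List.getD_eq_getElem _ _ (by simpa using h),
    List.getD_eq_getElem _ _ (by omega), List.getElem_reverse]

-- telescoping: sum of the u's of swapWord
lemma Us_swapWord (w : List (ℂ × ℂ)) : ∀ m, 1 ≤ m → m ≤ w.length →
    Us (swapWord w) m = vs w (w.length - m) := by
  intro m
  induction m with
  | zero => omega
  | succ m ih =>
    intro _ hm
    rcases Nat.eq_or_lt_of_le (Nat.one_le_iff_ne_zero.mpr (by omega) : 1 ≤ m + 1) with h1 | h1
    · -- m = 0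
      have hm0 : m = 0 := by omega
      subst hm0
      rw [Us_succ _ (by rw [swapWord_length]; omega), Us_zero,
        us_swapWord w (by omega)]
      simp
    · have hm1 : 1 ≤ m := by omega
      rw [Us_succ _ (by rw [swapWord_length]; omega), ih hm1 (by omega),
        us_swapWord w (by omega)]
      have h2 : (if m = 0 then (0:ℂ) else vs w (w.length - m)) = vs w (w.length - m) := by
        simp [Nat.one_le_iff_ne_zero.mp hm1]
      rw [h2]
      have : w.length - 1 - m = w.length - (m+1) := by omega
      rw [this]; ring

lemma swapWord_swapWord (w : List (ℂ × ℂ)) : swapWord (swapWord w) = w := by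
  apply List.ext_getElem
  · simp [swapWord_length]
  · intro j h1 h2
    rw [swapWord_getElem _ h1]
    rw [swapWord_length, swapWord_length] at h1
    have hr : j < w.length := h1
    rw [swapWord_length]
    have e1 : vs (swapWord w) (w.length - 1 - j) = Us w (j+1) := by
      rw [vs_swapWord w (by omega)]
      congr 1; omega
    rw [e1, getElem_eq w hr, Prod.mk.injEq]
    refine ⟨?_, ?_⟩
    · by_cases hj : j = 0
      · subst hj
        rw [Us_succ w (by omega), Us_zero]
        simp
      · rw [if_neg hj, vs_swapWord w (by omega)]
        have e2 : w.length - (w.length - j) = j := by omega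
        rw [e2, Us_succ w hr]
        ring
    · rw [Us_swapWord w (w.length - j) (by omega) (by omega)]
      congr 1
      omega


lemma negWord_length (w : List (ℂ × ℂ)) : (negWord w).length = w.length := by
  simp [negWord]

lemma us_negWord (w : List (ℂ × ℂ)) {i : ℕ} (h : i < w.length) :
    us (negWord w) i = -us w i := by
  rw [us, us, List.getD_eq_getElem _ _ (by simpa [negWord_length] using h),
    List.getD_eq_getElem _ _ h]
  simp [negWord]

lemma vs_negWord (w : List (ℂ × ℂ)) {i : ℕ} (h : i < w.length) :
    vs (negWord w) i = -vs w i := by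
  rw [vs, vs, List.getD_eq_getElem _ _ (by simpa [negWord_length] using h),
    List.getD_eq_getElem _ _ h]
  simp [negWord]

lemma negWord_sum (w : List (ℂ × ℂ)) :
    ((negWord w).map Prod.fst).sum = -((w.map Prod.fst).sum) := by
  induction w with
  | nil => simp [negWord]
  | cons x t ih =>
      simp only [negWord, List.map_cons, List.sum_cons] at ih ⊢
      rw [ih]; ring

lemma pushWord_cons (x : ℂ × ℂ) (l : List (ℂ × ℂ)) :
    pushWord (x :: l) =
      (-(((x :: l).map Prod.fst).sum), -(vs (x :: l) ((x :: l).length - 1))) ::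
        (List.range ((x :: l).length - 1)).map
          (fun i => (us (x :: l) i, vs (x :: l) i - vs (x :: l) ((x :: l).length - 1))) := rfl

lemma pushWord_length (w : List (ℂ × ℂ)) (hw : w ≠ []) :
    (pushWord w).length = w.length := by
  cases w with
  | nil => exact absurd rfl hw
  | cons x l => rw [pushWord_cons]; simp

lemma Us_full (w : List (ℂ × ℂ)) : Us w w.length = (w.map Prod.fst).sum := by
  rw [Us, List.take_length]

lemma Us_reverse_full (w : List (ℂ × ℂ)) :
    Us w.reverse w.length = (w.map Prod.fst).sum := by
  rw [show w.length = w.reverse.length by simp, Us_full, List.map_reverse, List.sum_reverse]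


section Zword
variable (w : List (ℂ × ℂ))

lemma z_length : ((swapWord w.reverse).reverse).length = w.length := by
  simp [swapWord_length]

lemma vs_z {i : ℕ} (h : i < w.length) :
    vs ((swapWord w.reverse).reverse) i = Us w.reverse (i + 1) := by
  have hy : (swapWord w.reverse).length = w.length := by simp [swapWord_length]
  rw [show (swapWord w.reverse).reverse = (swapWord w.reverse).reverse from rfl,
    vs_reverse _ (by rw [hy]; exact h), hy,
    vs_swapWord _ (by simp; omega)]
  congr 1
  simp
  omega

lemma us_z {i : ℕ} (h : i < w.length) :
    us ((swapWord w.reverse).reverse) i =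
      vs w.reverse i - (if i = w.length - 1 then 0 else vs w.reverse (i + 1)) := by
  have hy : (swapWord w.reverse).length = w.length := by simp [swapWord_length]
  rw [us_reverse _ (by rw [hy]; exact h), hy,
    us_swapWord _ (by simp; omega)]
  simp only [List.length_reverse]
  have e1 : w.length - 1 - (w.length - 1 - i) = i := by omega
  rw [e1]
  by_cases hi : i = w.length - 1
  · rw [if_pos (by omega), if_pos hi]
  · have e2 : w.length - (w.length - 1 - i) = i + 1 := by omega
    rw [if_neg (by omega), if_neg hi, e2]

lemma Us_z : ∀ m, m ≤ w.length → w.length ≠ 0 →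
    Us ((swapWord w.reverse).reverse) m =
      vs w.reverse 0 - (if m = w.length then 0 else vs w.reverse m) := by
  intro m
  induction m with
  | zero => intro _ h0; rw [if_neg (by omega), Us_zero]; ring
  | succ m ih =>
    intro hm h0
    rw [Us_succ _ (by rw [z_length]; omega), ih (by omega) h0,
      us_z w (by omega), if_neg (by omega)]
    by_cases hm1 : m + 1 = w.length
    · rw [if_pos hm1, if_pos (by omega)]
      ring
    · rw [if_neg hm1, if_neg (by omega)]
      ring

end Zword


lemma pushWord_eq (w : List (ℂ × ℂ)) (hw : w ≠ []) :
    pushWord w =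
      (-((w.map Prod.fst).sum), -(vs w (w.length - 1))) ::
        (List.range (w.length - 1)).map
          (fun i => (us w i, vs w i - vs w (w.length - 1))) := by
  cases w with
  | nil => exact absurd rfl hw
  | cons x l => exact pushWord_cons x l

lemma pushWord_negWord (w : List (ℂ × ℂ)) :
    pushWord (negWord w) = swapWord ((swapWord w.reverse).reverse) := by
  by_cases hwe : w = []
  · subst hwe; rfl
  · have hr : 1 ≤ w.length := by
      cases w with
      | nil => exact absurd rfl hwe
      | cons x l => simp
    have hnwne : negWord w ≠ [] := by
      simpa [negWord] using hwe
    rw [pushWord_eq _ hnwne, negWord_length]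
    apply List.ext_getElem
    · rw [swapWord_length, z_length]
      simp
      omega
    · intro j hj1 hj2
      rw [swapWord_length, z_length] at hj2
      rw [swapWord_getElem _ (by rw [swapWord_length, z_length]; exact hj2), z_length]
      match j with
      | 0 =>
        rw [List.getElem_cons_zero]
        simp only [Nat.sub_zero, if_pos rfl]
        rw [vs_z w (by omega)]
        have e1 : w.length - 1 + 1 = w.length := by omega
        rw [e1, Us_reverse_full, Us_z w w.length le_rfl (by omega), if_pos rfl,
          negWord_sum, vs_negWord w (by omega), vs_reverse w (by omega)]
        simp only [Nat.sub_zero]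
        rw [Prod.mk.injEq]
        constructor
        · simp
        · ring
      | Nat.succ k =>
        rw [List.getElem_cons_succ]
        have hk : k < w.length - 1 := by
          simp only [List.length_cons, List.length_map, List.length_range] at hj1
          omega
        rw [List.getElem_map, List.getElem_range,
          us_negWord w (by omega), vs_negWord w (by omega), vs_negWord w (by omega)]
        rw [if_neg (by omega)]
        have e1 : w.length - 1 - (k+1) = w.length - k - 2 := by omega
        have e2 : w.length - (k+1) = w.length - k - 1 := by omega
        rw [e1, e2, vs_z w (by omega), vs_z w (by omega),
          Us_z w (w.length - k - 1) (by omega) (by omega), if_neg (by omega)]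
        have e3 : w.length - k - 2 + 1 = w.length - k - 1 := by omega
        have e4 : w.length - k - 1 + 1 = w.length - k := by omega
        rw [e3, e4]
        have e5 : Us w.reverse (w.length - k) =
            Us w.reverse (w.length - k - 1) + us w.reverse (w.length - k - 1) := by
          rw [← Us_succ _ (by simp; omega)]
          congr 1
          omega
        rw [e5, us_reverse w (by omega), vs_reverse w (by omega), vs_reverse w (by omega)]
        have e6 : w.length - 1 - (w.length - k - 1) = k := by omega
        have e7 : w.length - 1 - 0 = w.length - 1 := by omega
        rw [e6, e7]
        rw [Prod.mk.injEq]
        constructor <;> ring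


end BimouldAux

namespace BimouldAux
open Bimould

lemma shuffles_nil_left {α : Type*} (v : List α) : shuffles [] v = [v] := by
  rw [shuffles]

lemma shuffles_nil_right {α : Type*} (u : List α) : shuffles u [] = [u] := by
  cases u with
  | nil => rw [shuffles]
  | cons x xs => rw [shuffles]

lemma shuffles_cons_cons {α : Type*} (x y : α) (xs ys : List α) :
    shuffles (x :: xs) (y :: ys) =
      ((shuffles xs (y :: ys)).map (x :: ·)) ++ ((shuffles (x :: xs) ys).map (y :: ·)) := by
  rw [shuffles]

/-- Alternal bimoulds are mantar-invariant. -/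
lemma reverse_eq (M : Bimould) (hal : M.IsAlternal) (w : List (ℂ × ℂ)) (hw : w ≠ []) :
    M w.reverse = (-1 : ℂ) ^ (w.length - 1) * M w := by
  have hn : 1 ≤ w.length := List.length_pos_iff.mpr hw
  set n := w.length with hndef
  set H : ℕ → ℂ := fun k =>
    ((shuffles ((w.take k).reverse) (w.drop (k + 1))).map
      (fun s => M (w.getD k (0, 0) :: s))).sum with hH
  have take_rev : ∀ k, k < n → (w.take (k + 1)).reverse = w.getD k (0, 0) :: (w.take k).reverse := by
    intro k hk
    rw [List.take_succ, List.getElem?_eq_getElem (by omega : k < w.length),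
      List.getD_eq_getElem _ _ (by omega : k < w.length)]
    simp
  have key : ∀ k, k + 1 < n → H (k + 1) = -H k := by
    intro k hk
    have halt := hal ((w.take (k + 1)).reverse) (w.drop (k + 1))
      (by
        intro hc
        have := congrArg List.length hc
        simp only [List.length_reverse, List.length_take, List.length_nil] at this
        omega)
      (by
        intro hc
        have := congrArg List.length hc
        simp only [List.length_drop, List.length_nil] at this
        omega)
    rw [take_rev k (by omega),
      List.drop_eq_getElem_cons (by omega : k + 1 < w.length),
      shuffles_cons_cons, List.map_append, List.sum_append] at halt
    have e1 : ((shuffles ((w.take k).reverse) (w[k+1] :: w.drop (k + 1 + 1))).map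
        (w.getD k (0,0) :: ·)).map M =
        (shuffles ((w.take k).reverse) (w[k+1] :: w.drop (k + 1 + 1))).map
          (fun s => M (w.getD k (0,0) :: s)) := by
      rw [List.map_map]; rfl
    have e2 : ((shuffles (w.getD k (0,0) :: (w.take k).reverse) (w.drop (k + 1 + 1))).map
        (w[k+1] :: ·)).map M =
        (shuffles (w.getD k (0,0) :: (w.take k).reverse) (w.drop (k + 1 + 1))).map
          (fun s => M (w[k+1] :: s)) := by
      rw [List.map_map]; rfl
    rw [e1, e2] at halt
    have eH1 : H k = ((shuffles ((w.take k).reverse) (w[k+1] :: w.drop (k + 1 + 1))).map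
        (fun s => M (w.getD k (0,0) :: s))).sum := by
      simp only [hH]
      congr 1
      rw [List.drop_eq_getElem_cons (by omega : k + 1 < w.length)]
    have eH2 : H (k + 1) = ((shuffles (w.getD k (0,0) :: (w.take k).reverse)
        (w.drop (k + 1 + 1))).map (fun s => M (w[k+1] :: s))).sum := by
      simp only [hH]
      rw [take_rev k (by omega), List.getD_eq_getElem _ _ (by omega : k + 1 < w.length)]
    rw [← eH1, ← eH2] at halt
    linear_combination halt
  have pow : ∀ k, k < n → H k = (-1 : ℂ) ^ k * M w := by
    intro k
    induction k with
    | zero =>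
      intro _
      simp only [hH]
      simp only [List.take_zero, List.reverse_nil, shuffles_nil_left, List.map_cons,
        List.map_nil, List.sum_cons, List.sum_nil, pow_zero, one_mul, add_zero]
      congr 1
      rw [List.getD_eq_getElem _ _ (by omega : 0 < w.length)]
      rw [← List.drop_eq_getElem_cons (by omega : 0 < w.length), List.drop_zero]
    | succ k ih =>
      intro hk
      rw [key k hk, ih (by omega)]
      ring
  have hfin : M w.reverse = H (n - 1) := by
    simp only [hH]
    have e3 : n - 1 + 1 = n := by omega
    rw [e3, hndef, List.drop_length, shuffles_nil_right]
    simp only [List.map_cons, List.map_nil, List.sum_cons, List.sum_nil, add_zero]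
    congr 1
    have e4 : w = w.take (n - 1) ++ [w[n-1]'(by omega)] := by
      conv_lhs => rw [← List.take_length (l := w), ← hndef, ← e3]
      rw [List.take_succ, List.getElem?_eq_getElem (by omega : n - 1 < w.length)]
      simp
    rw [List.getD_eq_getElem _ _ (by omega : n - 1 < w.length)]
    conv_lhs => rw [e4]
    rw [List.reverse_append]
    simp
    omega
  rw [hfin, pow (n - 1) (by omega)]

end BimouldAux

/-- an alternal bimould (hence mantar-invariant) whose swap is also
alternal is invariant under `neg ∘ push`. -/
theorem neg_push_invariance_of_alternal_with_alternal_swap (A : Bimould)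
    (h0 : A [] = 0) (hal : A.IsAlternal) (hswapal : (Bimould.swap A).IsAlternal) :
    Bimould.neg (Bimould.push A) = A := by
  funext w
  by_cases hwe : w = []
  · subst hwe; rfl
  · show A (Bimould.pushWord (Bimould.negWord w)) = A w
    have hr : 1 ≤ w.length := List.length_pos_iff.mpr hwe
    have hz : Bimould.swapWord w.reverse ≠ [] := by
      intro hc
      have := congrArg List.length hc
      rw [BimouldAux.swapWord_length, List.length_reverse] at this
      simp only [List.length_nil] at this
      omega
    have h1 := BimouldAux.reverse_eq A hal w hwe
    have h2 := BimouldAux.reverse_eq (Bimould.swap A) hswapal (Bimould.swapWord w.reverse) hz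
    have hlen : (Bimould.swapWord w.reverse).length = w.length := by
      rw [BimouldAux.swapWord_length, List.length_reverse]
    rw [hlen] at h2
    rw [BimouldAux.pushWord_negWord]
    calc A (Bimould.swapWord ((Bimould.swapWord w.reverse).reverse))
        = Bimould.swap A ((Bimould.swapWord w.reverse).reverse) := rfl
      _ = (-1:ℂ)^(w.length-1) * Bimould.swap A (Bimould.swapWord w.reverse) := h2
      _ = (-1:ℂ)^(w.length-1) * A (w.reverse) := by
            rw [show Bimould.swap A (Bimould.swapWord w.reverse)
                = A (Bimould.swapWord (Bimould.swapWord w.reverse)) from rfl,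
              BimouldAux.swapWord_swapWord]
      _ = (-1:ℂ)^(w.length-1) * ((-1:ℂ)^(w.length-1) * A w) := by rw [h1]
      _ = A w := by rw [← mul_assoc, ← mul_pow]; simp
end

section
/- Let A be a bimould concentrated in odd depth d = 2s+1 ≥ 3 which is alternal, odd under neg (neg(A) = −A), and invariant under neg ∘ push. Then A = 0. -/
section Statement8Aux

open Bimould

lemma negWord_negWord (w : List (ℂ × ℂ)) : negWord (negWord w) = w := by
  induction w with
  | nil => rfl
  | cons a t ih => simp [negWord] at ih ⊢; exact ih

lemma pushWord_concat (l : List (ℂ × ℂ)) (p : ℂ × ℂ) :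
    pushWord (l ++ [p]) =
      (-(((l ++ [p]).map Prod.fst).sum), -p.2) :: l.map (fun q => (q.1, q.2 - p.2)) := by
  obtain ⟨c, t, h⟩ : ∃ c t, l ++ [p] = c :: t := by
    cases l with
    | nil => exact ⟨p, [], rfl⟩
    | cons a l' => exact ⟨a, l' ++ [p], rfl⟩
  rw [h]
  show (-(((c :: t).map Prod.fst).sum), -(((c :: t).getD ((c :: t).length - 1) (0,0)).2)) ::
      (List.range ((c :: t).length - 1)).map
        (fun i => (((c :: t).getD i (0,0)).1, ((c :: t).getD i (0,0)).2 - ((c :: t).getD ((c :: t).length - 1) (0,0)).2)) = _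
  rw [← h]
  have hlen : (l ++ [p]).length = l.length + 1 := by simp
  have hlast : (l ++ [p]).getD ((l ++ [p]).length - 1) (0,0) = p := by
    rw [hlen]
    simp only [Nat.add_sub_cancel]
    rw [List.getD_eq_getElem _ _ (by simp)]
    rw [List.getElem_append_right (by omega)]
    simp
  rw [hlast, hlen]
  simp only [Nat.add_sub_cancel]
  congr 1
  apply List.ext_getElem
  · simp
  · intro i h1 h2
    simp only [List.getElem_map, List.getElem_range]
    rw [List.getD_eq_getElem _ _ (by simp at h1 ⊢; omega)]
    rw [List.getElem_append_left (by simp at h1 ⊢; omega)]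

lemma shuffles_singleton {α : Type*} (a : α) (b : List α) :
    shuffles [a] b = (List.range (b.length + 1)).map (fun i => b.insertIdx i a) := by
  induction b with
  | nil => rw [shuffles]; rfl
  | cons y ys ih =>
    rw [shuffles, ih]
    have : List.range (ys.length + 1 + 1) = 0 :: (List.range (ys.length + 1)).map Nat.succ :=
      List.range_succ_eq_map
    rw [List.length_cons, this]
    simp only [List.map_cons, List.map_map, shuffles, List.map_cons, List.map_nil]
    simp [Function.comp_def, List.insertIdx_succ_cons]

lemma insertIdx_take_drop {α : Type*} (x : α) :
    ∀ (m : ℕ) (l : List α), m ≤ l.length → l.insertIdx m x = l.take m ++ x :: l.drop m := by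
  intro m
  induction m with
  | zero => intro l _; simp
  | succ n ih =>
    intro l hl
    cases l with
    | nil => simp at hl
    | cons c t =>
      rw [List.insertIdx_succ_cons, ih t (by simpa using hl)]
      simp

lemma map_insertIdx {α β : Type*} (f : α → β) (x : α) :
    ∀ (m : ℕ) (l : List α), (l.insertIdx m x).map f = (l.map f).insertIdx m (f x) := by
  intro m
  induction m with
  | zero => intro l; simp
  | succ n ih =>
    intro l
    cases l with
    | nil => simp
    | cons c t => simp [List.insertIdx_succ_cons, ih]

lemma rot_insert {α : Type*} (l : List α) (x : α) (m : ℕ) (h1 : 1 ≤ m) (h2 : m ≤ l.length) :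
    (x :: l.rotate m).rotate (l.length + 1 - m) = l.insertIdx m x := by
  rw [List.rotate_eq_drop_append_take h2, insertIdx_take_drop x m l h2]
  have hlen : (x :: (l.drop m ++ l.take m)).length = l.length + 1 := by simp [Nat.add_comm]; omega
  rw [List.rotate_eq_drop_append_take (by rw [hlen]; omega)]
  have hd : (x :: (l.drop m ++ l.take m)).drop (l.length + 1 - m) = l.take m := by
    have : l.length + 1 - m = (l.drop m).length + 1 := by simp; omega
    rw [this, List.drop_succ_cons]
    exact List.drop_left
  have ht : (x :: (l.drop m ++ l.take m)).take (l.length + 1 - m) = x :: l.drop m := by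
    have : l.length + 1 - m = (l.drop m).length + 1 := by simp; omega
    rw [this, List.take_succ_cons]
    congr 1
    exact List.take_left
  rw [hd, ht]

lemma list_sum_map_range {M : Type*} [AddCommMonoid M] (f : ℕ → M) (n : ℕ) :
    ((List.range n).map f).sum = ∑ i ∈ Finset.range n, f i := by
  induction n with
  | zero => simp
  | succ k ih => rw [List.range_succ, Finset.sum_range_succ, List.map_append, List.sum_append, ih]; simp

/-- The "cyclic" encoding: first letter is a basepoint, evaluate `A` on the rest with shifted `v`s. -/
def Cc (A : Bimould) : List (ℂ × ℂ) → ℂ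
  | [] => 0
  | c :: z => A (z.map fun p => (p.1, p.2 - c.2))

lemma Cc_rot (A : Bimould) (hpush : ∀ v, A (pushWord v) = -A v) (hnil : A [] = 0)
    (l : List (ℂ × ℂ)) (hsum : (l.map Prod.fst).sum = 0) :
    Cc A (l.rotate 1) = -Cc A l := by
  match l with
  | [] => simp [Cc]
  | [c] => simp [Cc, List.rotate_singleton, hnil]
  | c :: z1 :: zt =>
    have hrot : (c :: z1 :: zt).rotate 1 = z1 :: (zt ++ [c]) := by
      rw [List.rotate_cons_succ, List.rotate_zero]; rfl
    rw [hrot]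
    show A (((zt ++ [c]).map fun p => (p.1, p.2 - z1.2))) = -A ((z1 :: zt).map fun p => (p.1, p.2 - c.2))
    have hW : ((zt ++ [c]).map fun p => (p.1, p.2 - z1.2))
        = (zt.map fun p => (p.1, p.2 - z1.2)) ++ [(c.1, c.2 - z1.2)] := by simp
    rw [hW]
    have key := hpush ((zt.map fun p => (p.1, p.2 - z1.2)) ++ [(c.1, c.2 - z1.2)])
    rw [pushWord_concat] at key
    have hsum' : -((((zt.map fun p => (p.1, p.2 - z1.2)) ++ [(c.1, c.2 - z1.2)]).map Prod.fst).sum) = z1.1 := by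
      simp only [List.map_append, List.map_map, List.sum_append, List.map_cons, List.map_nil,
        List.sum_cons, List.sum_nil] at hsum ⊢
      have : ((fun p : ℂ × ℂ => p.1) ∘ (fun p : ℂ × ℂ => ((p.1, p.2 - z1.2) : ℂ × ℂ))) = Prod.fst := by
        funext q; rfl
      rw [this]
      simp at hsum ⊢
      linear_combination -hsum
    rw [hsum'] at key
    have htail : (zt.map fun p => (p.1, p.2 - z1.2)).map (fun q => (q.1, q.2 - (c.2 - z1.2)))
        = zt.map fun p => (p.1, p.2 - c.2) := by
      rw [List.map_map]
      apply List.map_congr_left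
      intro q _
      show ((q.1, q.2 - z1.2 - (c.2 - z1.2)) : ℂ × ℂ) = _
      congr 1
      ring
    rw [htail] at key
    have hfin : ((z1.1, -(c.2 - z1.2)) :: zt.map fun p => (p.1, p.2 - c.2))
        = (z1 :: zt).map fun p => (p.1, p.2 - c.2) := by
      simp only [List.map_cons]
      congr 2
      ring
    rw [hfin] at key
    linear_combination key

lemma Cc_rot_pow (A : Bimould) (hpush : ∀ v, A (pushWord v) = -A v) (hnil : A [] = 0)
    (k : ℕ) (l : List (ℂ × ℂ)) (hsum : (l.map Prod.fst).sum = 0) :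
    Cc A (l.rotate k) = (-1 : ℂ) ^ k * Cc A l := by
  induction k with
  | zero => simp
  | succ n ih =>
    have h1 : l.rotate (n + 1) = (l.rotate n).rotate 1 := by rw [List.rotate_rotate]
    have hsum' : ((l.rotate n).map Prod.fst).sum = 0 := by
      rw [((l.rotate_perm n).map Prod.fst).sum_eq]; exact hsum
    rw [h1, Cc_rot A hpush hnil _ hsum', ih]
    ring

end Statement8Aux

/-- a bimould concentrated in odd depth `d = 2s+1 ≥ 3` which is alternal,
odd under `neg`, and invariant under `neg ∘ push` must vanish. -/
theorem odd_depth_odd_alternal_pushneg_invariant_is_zero (A : Bimould) (s : ℕ) (hs : 1 ≤ s)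
    (hconc : ∀ w : List (ℂ × ℂ), w.length ≠ 2 * s + 1 → A w = 0)
    (hal : A.IsAlternal)
    (hodd : Bimould.neg A = - A)
    (hinv : Bimould.neg (Bimould.push A) = A) :
    A = 0 := by
  have hnil : A [] = 0 := hconc [] (by simp)
  have hpush : ∀ v, A (Bimould.pushWord v) = -A v := by
    intro v
    have h1 : A (Bimould.pushWord (Bimould.negWord (Bimould.negWord v))) = A (Bimould.negWord v) := congrFun hinv (Bimould.negWord v)
    rw [negWord_negWord] at h1
    have h2 : A (Bimould.negWord v) = -A v := congrFun hodd v
    rw [h1, h2]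
  set d := 2 * s + 1 with hd
  funext w
  show A w = 0
  by_cases hlen : w.length = d
  swap
  · exact hconc w hlen
  -- main case
  set x0 : ℂ × ℂ := (-(w.map Prod.fst).sum, 0) with hx0
  set F : ℕ → ℂ := fun k => Cc A (x0 :: w.rotate k) with hF
  have hsum0 : ∀ k, (((x0 :: w.rotate k)).map Prod.fst).sum = 0 := by
    intro k
    have : ((w.rotate k).map Prod.fst).sum = (w.map Prod.fst).sum :=
      ((w.rotate_perm k).map Prod.fst).sum_eq
    rw [List.map_cons, List.sum_cons, this, hx0]; simp
  have hF0 : F 0 = A w := by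
    rw [hF]
    simp only [List.rotate_zero]
    show A (w.map fun p => (p.1, p.2 - (0:ℂ))) = A w
    congr 1
    conv_rhs => rw [← List.map_id w]
    apply List.map_congr_left
    intro q _
    simp
  have hFper : ∀ k, F (d + k) = F k := by
    intro k
    have : w.rotate (d + k) = w.rotate k := by
      rw [← List.rotate_rotate, ← hlen, List.rotate_length]
    rw [hF]; simp only [this]
  -- the alternality relations, transported
  have G : ∀ j, ∑ i ∈ Finset.range d, (-1 : ℂ) ^ i * F (j + i + 1) = 0 := by
    intro j
    have hrotlen : (w.rotate j).length = d := by rw [List.length_rotate, hlen]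
    obtain ⟨y, t, hyt⟩ := List.exists_cons_of_ne_nil
      (show w.rotate j ≠ [] by intro h; rw [h] at hrotlen; simp at hrotlen)
    have ht : t.length = d - 1 := by
      have := hrotlen; rw [hyt] at this; simp at this; omega
    have halrel := hal [(x0.1, x0.2 - y.2)] (t.map fun p => (p.1, p.2 - y.2))
      (by simp) (by intro h; rw [List.map_eq_nil_iff] at h; rw [h] at ht; simp only [List.length_nil] at ht; omega)
    rw [shuffles_singleton] at halrel
    rw [List.map_map, list_sum_map_range] at halrel
    have hlen2 : (t.map fun p : ℂ × ℂ => (p.1, p.2 - y.2)).length + 1 = d := by rw [List.length_map, ht]; omega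
    rw [hlen2] at halrel
    -- identify each term
    have hterm : ∀ i ∈ Finset.range d,
        (A ∘ fun i => (t.map fun p : ℂ × ℂ => (p.1, p.2 - y.2)).insertIdx i (x0.1, x0.2 - y.2)) i
          = (-1 : ℂ) ^ (d - i) * F (j + i + 1) := by
      intro i hi
      simp only [Finset.mem_range] at hi
      show A ((t.map fun p : ℂ × ℂ => (p.1, p.2 - y.2)).insertIdx i (x0.1, x0.2 - y.2)) = _
      have e1 : (t.map fun p : ℂ × ℂ => (p.1, p.2 - y.2)).insertIdx i (x0.1, x0.2 - y.2)
          = ((t.insertIdx i x0).map fun p => (p.1, p.2 - y.2)) := by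
        rw [map_insertIdx]
      have e2 : A ((t.insertIdx i x0).map fun p => (p.1, p.2 - y.2))
          = Cc A (y :: t.insertIdx i x0) := rfl
      have e3 : y :: t.insertIdx i x0 = (w.rotate j).insertIdx (i + 1) x0 := by
        rw [hyt, List.insertIdx_succ_cons]
      have e4 : (w.rotate j).insertIdx (i + 1) x0
          = (x0 :: (w.rotate j).rotate (i + 1)).rotate ((w.rotate j).length + 1 - (i + 1)) := by
        rw [rot_insert _ _ _ (by omega) (by omega)]
      have e5 : (w.rotate j).rotate (i + 1) = w.rotate (j + i + 1) := by
        rw [List.rotate_rotate]; ring_nf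
      have e6 : (w.rotate j).length + 1 - (i + 1) = d - i := by omega
      rw [e1, e2, e3, e4, e5, e6]
      rw [Cc_rot_pow A hpush hnil _ _ (hsum0 (j + i + 1))]
    rw [Finset.sum_congr rfl hterm] at halrel
    -- remove the sign (-1)^d
    have hsplit : ∀ i ∈ Finset.range d, (-1 : ℂ) ^ (d - i) * F (j + i + 1)
        = (-1 : ℂ) ^ d * ((-1 : ℂ) ^ i * F (j + i + 1)) := by
      intro i hi
      simp only [Finset.mem_range] at hi
      have h1 : (-1 : ℂ) ^ (d - i) * (-1 : ℂ) ^ i = (-1 : ℂ) ^ d := by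
        rw [← pow_add, Nat.sub_add_cancel (by omega)]
      have h2 : (-1 : ℂ) ^ i * (-1 : ℂ) ^ i = 1 := by
        rw [← mul_pow]; norm_num
      calc (-1 : ℂ) ^ (d - i) * F (j + i + 1)
          = ((-1 : ℂ) ^ (d - i) * (-1 : ℂ) ^ i) * (-1 : ℂ) ^ i * F (j + i + 1) := by
            rw [mul_assoc ((-1 : ℂ) ^ (d - i)), h2, mul_one]
        _ = (-1 : ℂ) ^ d * ((-1 : ℂ) ^ i * F (j + i + 1)) := by rw [h1]; ring
    rw [Finset.sum_congr rfl hsplit, ← Finset.mul_sum] at halrel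
    have hne : (-1 : ℂ) ^ d ≠ 0 := by
      apply pow_ne_zero; norm_num
    exact (mul_eq_zero.mp halrel).resolve_left hne
  -- telescoping
  set g : ℕ → ℂ := fun i => (-1 : ℂ) ^ i * F i with hg
  have E0 : ∑ i ∈ Finset.range d, g (i + 1) = 0 := by
    have := G 0
    rw [← neg_eq_zero, ← Finset.sum_neg_distrib] at this
    rw [← this]
    apply Finset.sum_congr rfl
    intro i _
    rw [hg]
    show (-1 : ℂ) ^ (i + 1) * F (i + 1) = -((-1 : ℂ) ^ i * F (0 + i + 1))
    rw [show (0:ℕ) + i + 1 = i + 1 from by omega, pow_succ]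
    ring
  have E1 : ∑ i ∈ Finset.range d, g i = 0 := by
    have := G (d - 1)
    rw [← this]
    apply Finset.sum_congr rfl
    intro i _
    rw [hg]
    show (-1 : ℂ) ^ i * F i = (-1 : ℂ) ^ i * F (d - 1 + i + 1)
    rw [show d - 1 + i + 1 = d + i from by omega, hFper]
  have htel : ∑ i ∈ Finset.range d, (g (i + 1) - g i) = g d - g 0 := Finset.sum_range_sub g d
  rw [Finset.sum_sub_distrib, E0, E1, sub_zero] at htel
  have hgd : g d = -F 0 := by
    rw [hg]
    show (-1 : ℂ) ^ d * F d = -F 0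
    have h1 : F d = F 0 := by have := hFper 0; rwa [Nat.add_zero] at this
    have h2 : (-1 : ℂ) ^ d = -1 := Odd.neg_one_pow ⟨s, by omega⟩
    rw [h1, h2]; ring
  have hg0 : g 0 = F 0 := by rw [hg]; show (-1 : ℂ) ^ 0 * F 0 = F 0; ring
  rw [hgd, hg0] at htel
  have : F 0 = 0 := by linear_combination htel / 2
  rw [← hF0, this]
end
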